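/- For all vectors x, y in ℝ^N with N ≥ 2, one has ⟨|x|^{N-2} x − |y|^{N-2} y, x − y⟩ ≥ 2^{2−N} |x − y|^N, where ⟨·,·⟩ is the Euclidean inner product and |·| the Euclidean norm. -/
import Mathlib


open Real

theorem nLaplacian_monotonicity (N : ℕ) (hN : 2 ≤ N) (x y : EuclideanSpace ℝ (Fin N)) :
    (2:ℝ) ^ ((2:ℤ) - (N:ℤ)) * ‖x - y‖ ^ N ≤
      inner (𝕜 := ℝ) (‖x‖ ^ (N - 2) • x - ‖y‖ ^ (N - 2) • y) (x - y) := by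
  obtain ⟨n, rfl⟩ : ∃ n, N = n + 2 := ⟨N - 2, by omega⟩
  set a := ‖x‖ with ha
  set b := ‖y‖ with hb
  have ha0 : 0 ≤ a := norm_nonneg x
  have hb0 : 0 ≤ b := norm_nonneg y
  have hI : inner (𝕜 := ℝ) x y ≤ a * b := real_inner_le_norm x y
  have hsq : ‖x - y‖ ^ 2 = a ^ 2 + b ^ 2 - 2 * inner (𝕜 := ℝ) x y := by
    rw [ha, hb, norm_sub_sq_real]; ring
  have hkey : inner (𝕜 := ℝ) (a ^ n • x - b ^ n • y) (x - y)
      = (a ^ n + b ^ n) / 2 * ‖x - y‖ ^ 2 + (a ^ n - b ^ n) * (a ^ 2 - b ^ 2) / 2 := by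
    rw [hsq]
    simp only [inner_sub_left, inner_sub_right, real_inner_smul_left]
    rw [real_inner_self_eq_norm_sq x, real_inner_self_eq_norm_sq y,
      real_inner_comm y x]
    ring
  have hsign : 0 ≤ (a ^ n - b ^ n) * (a ^ 2 - b ^ 2) := by
    rcases le_total a b with h | h
    · have h1 := pow_le_pow_left₀ ha0 h n
      have h2 := pow_le_pow_left₀ ha0 h 2
      nlinarith
    · have h1 := pow_le_pow_left₀ hb0 h n
      have h2 := pow_le_pow_left₀ hb0 h 2
      nlinarith
  have hab : ‖x - y‖ ≤ a + b := norm_sub_le x y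
  have hpow : 2 * (a + b) ^ n ≤ 2 ^ n * (a ^ n + b ^ n) := by
    rcases Nat.eq_zero_or_pos n with rfl | hn
    · norm_num
    · have := add_pow_le ha0 hb0 n
      have h2 : (2:ℝ) * 2 ^ (n - 1) = 2 ^ n := by
        rw [← pow_succ']; congr 1; omega
      calc 2 * (a + b) ^ n ≤ 2 * (2 ^ (n - 1) * (a ^ n + b ^ n)) := by linarith
        _ = 2 ^ n * (a ^ n + b ^ n) := by rw [← mul_assoc, h2]
  have hz : ((2:ℝ) ^ ((2:ℤ) - ((n:ℤ) + 2)) : ℝ) = ((2:ℝ) ^ n)⁻¹ := by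
    have : (2:ℤ) - ((n:ℤ) + 2) = -(n:ℤ) := by ring
    rw [this, zpow_neg, zpow_natCast]
  have hnorm : (0:ℝ) ≤ ‖x - y‖ := norm_nonneg _
  have hpowxy : ‖x - y‖ ^ n ≤ (a + b) ^ n := pow_le_pow_left₀ hnorm hab n
  have h2n : (0:ℝ) < 2 ^ n := by positivity
  have hmain : ((2:ℝ) ^ n)⁻¹ * ‖x - y‖ ^ (n + 2) ≤ (a ^ n + b ^ n) / 2 * ‖x - y‖ ^ 2 := by
    have hxy2 : (0:ℝ) ≤ ‖x - y‖ ^ 2 := by positivity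
    have hchain : 2 * ‖x - y‖ ^ n ≤ 2 ^ n * (a ^ n + b ^ n) := by
      nlinarith
    rw [pow_add]
    rw [inv_mul_le_iff₀ h2n] at *
    nlinarith
  calc (2:ℝ) ^ ((2:ℤ) - ((n:ℕ) + 2 : ℕ)) * ‖x - y‖ ^ (n + 2)
      = ((2:ℝ) ^ n)⁻¹ * ‖x - y‖ ^ (n + 2) := by push_cast; rw [hz]
    _ ≤ (a ^ n + b ^ n) / 2 * ‖x - y‖ ^ 2 := hmain
    _ ≤ inner (𝕜 := ℝ) (a ^ n • x - b ^ n • y) (x - y) := by rw [hkey]; linarith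
    _ = inner (𝕜 := ℝ) (a ^ (n + 2 - 2) • x - b ^ (n + 2 - 2) • y) (x - y) := by norm_num
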